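/- An element g ∈ SU(2,2) maps the set of planes {column span of (I₂ ; A) : A ∈ M₂(ℂ) hermitian} into itself if and only if g has the block form (L 0; NL (L†)⁻¹) with L ∈ GL(2,ℂ), N hermitian (N† = N) and det L ∈ ℝ; for such g, the action in the coordinate A is A ↦ N + (L†)⁻¹ A L⁻¹ (which is again hermitian). -/

import Mathlib

open Matrix

/-- The block matrix (L M; N R) viewed as a 4×4 matrix with respect to the
decomposition ℂ⁴ = span{e₁,e₂} ⊕ span{e₃,e₄}. -/
def blk (L M N R : Matrix (Fin 2) (Fin 2) ℂ) : Matrix (Fin 4) (Fin 4) ℂ :=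
  Matrix.reindex finSumFinEquiv finSumFinEquiv (Matrix.fromBlocks L M N R)

/-- The matrix F = (0 I₂; −I₂ 0) of the hermitian form of signature (2,2) defining
SU(2,2) = {g ∈ SL(4,ℂ) : g† F g = F}. -/
def Fmat : Matrix (Fin 4) (Fin 4) ℂ := blk 0 1 (-1) 0

/-- The 4×2 block matrix (I₂ ; A). -/
def colMat (A : Matrix (Fin 2) (Fin 2) ℂ) : Matrix (Fin 4) (Fin 2) ℂ :=
  Matrix.reindex finSumFinEquiv (Equiv.refl (Fin 2))
    (Matrix.fromRows (1 : Matrix (Fin 2) (Fin 2) ℂ) A)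

/-- The column span of (I₂ ; A). -/
noncomputable def colSpan (A : Matrix (Fin 2) (Fin 2) ℂ) : Submodule ℂ (Fin 4 → ℂ) :=
  LinearMap.range (Matrix.toLin' (colMat A))

namespace S16

abbrev M2 := Matrix (Fin 2) (Fin 2) ℂ

def stk (U V : M2) : Matrix (Fin 4) (Fin 2) ℂ :=
  Matrix.reindex finSumFinEquiv (Equiv.refl (Fin 2)) (Matrix.fromRows U V)

lemma colMat_eq_stk (A : M2) : colMat A = stk 1 A := rfl

lemma blk_mul (a b c d a' b' c' d' : M2) :
    blk a b c d * blk a' b' c' d' =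
      blk (a*a'+b*c') (a*b'+b*d') (c*a'+d*c') (c*b'+d*d') := by
  simp only [blk, reindex_apply, submatrix_mul_equiv, fromBlocks_multiply]

lemma blk_mul_stk (a b c d U V : M2) :
    blk a b c d * stk U V = stk (a*U+b*V) (c*U+d*V) := by
  simp only [blk, stk, reindex_apply, submatrix_mul_equiv, fromBlocks_mul_fromRows]

lemma stk_mul (U V X : M2) : stk U V * X = stk (U*X) (V*X) := by
  calc stk U V * X
      = (Matrix.fromRows U V).submatrix finSumFinEquiv.symm (Equiv.refl (Fin 2))
          * X.submatrix (Equiv.refl (Fin 2)) id := by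
        simp [stk, reindex_apply]
    _ = (Matrix.fromRows U V * X).submatrix finSumFinEquiv.symm id :=
        submatrix_mul_equiv _ _ _ _ _
    _ = stk (U*X) (V*X) := by
      simp [stk, reindex_apply, fromRows_mul]

lemma blk_conjT (a b c d : M2) : (blk a b c d)ᴴ = blk aᴴ cᴴ bᴴ dᴴ := by
  simp only [blk, reindex_apply, conjTranspose_submatrix, fromBlocks_conjTranspose]

lemma blk_inj {a b c d a' b' c' d' : M2} (h : blk a b c d = blk a' b' c' d') :
    a = a' ∧ b = b' ∧ c = c' ∧ d = d' := by
  have h2 := (Matrix.reindex finSumFinEquiv finSumFinEquiv).injective h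
  refine ⟨?_, ?_, ?_, ?_⟩
  · have := congrArg Matrix.toBlocks₁₁ h2; simpa [toBlocks_fromBlocks₁₁] using this
  · have := congrArg Matrix.toBlocks₁₂ h2; simpa [toBlocks_fromBlocks₁₂] using this
  · have := congrArg Matrix.toBlocks₂₁ h2; simpa [toBlocks_fromBlocks₂₁] using this
  · have := congrArg Matrix.toBlocks₂₂ h2; simpa [toBlocks_fromBlocks₂₂] using this

lemma stk_inj {U V U' V' : M2} (h : stk U V = stk U' V') : U = U' ∧ V = V' := by
  have h2 := (Matrix.reindex finSumFinEquiv (Equiv.refl (Fin 2))).injective h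
  constructor
  · ext i j; exact congrFun (congrFun h2 (Sum.inl i)) j
  · ext i j; exact congrFun (congrFun h2 (Sum.inr i)) j

lemma blk_decomp (g : Matrix (Fin 4) (Fin 4) ℂ) :
    ∃ a b c d : M2, g = blk a b c d := by
  let G : Matrix (Fin 2 ⊕ Fin 2) (Fin 2 ⊕ Fin 2) ℂ :=
    Matrix.of fun i j => g (finSumFinEquiv i) (finSumFinEquiv j)
  refine ⟨G.toBlocks₁₁, G.toBlocks₁₂, G.toBlocks₂₁, G.toBlocks₂₂, ?_⟩
  ext i j
  rw [blk, fromBlocks_toBlocks]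
  simp [Matrix.reindex_apply, Matrix.submatrix_apply, G]

lemma blk_one : blk 1 0 0 1 = 1 := by
  rw [blk, Matrix.fromBlocks_one, Matrix.reindex_apply, Matrix.submatrix_one_equiv]

lemma det_blk_lower (a c d : M2) : (blk a 0 c d).det = a.det * d.det := by
  rw [blk, Matrix.reindex_apply, Matrix.det_submatrix_equiv_self, det_fromBlocks_zero₁₂]

lemma herm_fin_two {a b c d : ℂ} (ha : star a = a) (hd : star d = d) (hbc : star b = c) :
    (!![a, b; c, d] : M2)ᴴ = !![a, b; c, d] := by
  have h1 : star c = b := by rw [← hbc, star_star]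
  ext i j
  fin_cases i <;> fin_cases j <;>
    simp only [Matrix.conjTranspose_apply, Matrix.cons_val', Matrix.cons_val_zero,
      Matrix.cons_val_one, Matrix.head_cons, Matrix.empty_val', Matrix.cons_val_fin_one,
      Matrix.head_fin_const] <;>
    first | exact ha | exact hd | exact hbc | exact h1

lemma range_map (g : Matrix (Fin 4) (Fin 4) ℂ) (M : Matrix (Fin 4) (Fin 2) ℂ) :
    (LinearMap.range (Matrix.toLin' M)).map (Matrix.toLin' g)
      = LinearMap.range (Matrix.toLin' (g * M)) := by
  rw [Matrix.toLin'_mul, ← LinearMap.range_comp]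

lemma range_le_iff {M N : Matrix (Fin 4) (Fin 2) ℂ} :
    LinearMap.range (Matrix.toLin' M) ≤ LinearMap.range (Matrix.toLin' N)
      ↔ ∃ X : M2, M = N * X := by
  constructor
  · intro h
    have hj : ∀ j, ∃ x : Fin 2 → ℂ, N *ᵥ x = Mᵀ j := by
      intro j
      have : Mᵀ j ∈ LinearMap.range (Matrix.toLin' N) := by
        apply h
        exact ⟨Pi.single j 1, by rw [Matrix.toLin'_apply, Matrix.mulVec_single_one]; rfl⟩
      obtain ⟨x, hx⟩ := this
      exact ⟨x, by simpa [Matrix.toLin'_apply] using hx⟩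
    choose x hx using hj
    refine ⟨Matrix.of fun k j => x j k, ?_⟩
    ext i j
    have := congrFun (hx j) i
    simp only [Matrix.mulVec, dotProduct, Matrix.transpose_apply] at this
    simp only [Matrix.mul_apply, Matrix.of_apply]
    exact this.symm
  · rintro ⟨X, rfl⟩
    rw [Matrix.toLin'_mul]
    exact LinearMap.range_comp_le_range _ _

lemma range_mul_unit {M : Matrix (Fin 4) (Fin 2) ℂ} {X : M2} (hX : IsUnit X) :
    LinearMap.range (Matrix.toLin' (M * X)) = LinearMap.range (Matrix.toLin' M) := by
  apply le_antisymm
  · exact range_le_iff.2 ⟨X, rfl⟩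
  · refine range_le_iff.2 ⟨X⁻¹, ?_⟩
    rw [Matrix.mul_assoc, Matrix.mul_nonsing_inv _ (Matrix.isUnit_iff_isUnit_det _ |>.1 hX),
      Matrix.mul_one]

lemma herm_ne_unit {P : M2} (hP : Pᴴ = P)
    (h : ∀ A : M2, Aᴴ = A → IsUnit ((1 : M2) + P * A)) : P = 0 := by
  by_contra hne
  have hp : star (P 0 0) = P 0 0 := congrFun (congrFun hP 0) 0
  have hr : star (P 1 1) = P 1 1 := congrFun (congrFun hP 1) 1
  have hq : star (P 0 1) = P 1 0 := congrFun (congrFun hP 1) 0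
  set p := P 0 0
  set q := P 0 1
  set r := P 1 1
  have hPe : P = !![p, q; P 1 0, r] := Matrix.eta_fin_two P
  by_cases hp0 : p = 0
  · by_cases hr0 : r = 0
    · by_cases hq0 : q = 0
      · apply hne
        rw [hPe, ← hq, hp0, hr0, hq0]
        ext i j
        fin_cases i <;> fin_cases j <;> simp
      · -- P = (0 q; q̄ 0)
        have hA : (!![0, -(star q)⁻¹; -q⁻¹, 0] : M2)ᴴ = !![0, -(star q)⁻¹; -q⁻¹, 0] := by
          apply herm_fin_two (star_zero _) (star_zero _)
          rw [star_neg, star_inv₀, star_star]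
        have := h _ hA
        rw [Matrix.isUnit_iff_isUnit_det, isUnit_iff_ne_zero] at this
        apply this
        have hsq : star q ≠ 0 := fun hh => hq0 (by simpa using congrArg star hh)
        rw [hPe, ← hq, hp0, hr0, Matrix.one_fin_two, Matrix.mul_fin_two, Matrix.det_fin_two]
        simp only [Matrix.add_apply, Matrix.cons_val', Matrix.cons_val_zero,
          Matrix.cons_val_one, Matrix.head_cons, Matrix.empty_val', Matrix.cons_val_fin_one,
          Matrix.head_fin_const, Matrix.of_apply]
        field_simp
        ring
    · -- r ≠ 0
      have hA : (!![0, 0; 0, -r⁻¹] : M2)ᴴ = !![0, 0; 0, -r⁻¹] := by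
        apply herm_fin_two (star_zero _) _ (star_zero _)
        rw [star_neg, star_inv₀, hr]
      have := h _ hA
      rw [Matrix.isUnit_iff_isUnit_det, isUnit_iff_ne_zero] at this
      apply this
      rw [hPe, Matrix.one_fin_two, Matrix.mul_fin_two, Matrix.det_fin_two]
      simp only [Matrix.add_apply, Matrix.cons_val', Matrix.cons_val_zero,
        Matrix.cons_val_one, Matrix.head_cons, Matrix.empty_val', Matrix.cons_val_fin_one,
        Matrix.head_fin_const, Matrix.of_apply]
      field_simp
      ring
  · -- p ≠ 0
    have hA : (!![-p⁻¹, 0; 0, 0] : M2)ᴴ = !![-p⁻¹, 0; 0, 0] := by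
      apply herm_fin_two _ (star_zero _) (star_zero _)
      rw [star_neg, star_inv₀, hp]
    have := h _ hA
    rw [Matrix.isUnit_iff_isUnit_det, isUnit_iff_ne_zero] at this
    apply this
    rw [hPe, Matrix.one_fin_two, Matrix.mul_fin_two, Matrix.det_fin_two]
    simp only [Matrix.add_apply, Matrix.cons_val', Matrix.cons_val_zero,
      Matrix.cons_val_one, Matrix.head_cons, Matrix.empty_val', Matrix.cons_val_fin_one,
      Matrix.head_fin_const, Matrix.of_apply]
    field_simp
    ring

end S16

/-- g ∈ SU(2,2) maps the set of planes {col span (I₂;A) : A hermitian}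
into itself iff g = (L 0; NL (L†)⁻¹) with L invertible, N hermitian and det L real;
for such g, the action is A ↦ N + (L†)⁻¹ A L⁻¹, which is again hermitian. -/
theorem stmt_16 :
    ∀ g : Matrix (Fin 4) (Fin 4) ℂ, g.det = 1 → gᴴ * Fmat * g = Fmat →
      ((∀ A : Matrix (Fin 2) (Fin 2) ℂ, Aᴴ = A →
          ∃ A' : Matrix (Fin 2) (Fin 2) ℂ, A'ᴴ = A' ∧
            (colSpan A).map (Matrix.toLin' g) = colSpan A') ↔
        ∃ L N : Matrix (Fin 2) (Fin 2) ℂ, IsUnit L ∧ Nᴴ = N ∧ (L.det).im = 0 ∧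
          g = blk L 0 (N * L) (Lᴴ)⁻¹ ∧
          ∀ A : Matrix (Fin 2) (Fin 2) ℂ, Aᴴ = A →
            (colSpan A).map (Matrix.toLin' g) = colSpan (N + (Lᴴ)⁻¹ * A * L⁻¹) ∧
            (N + (Lᴴ)⁻¹ * A * L⁻¹)ᴴ = N + (Lᴴ)⁻¹ * A * L⁻¹) := by
  intro g hdet hF
  obtain ⟨a, b, c, d, hg⟩ := S16.blk_decomp g
  subst hg
  constructor
  · intro hyp
    -- extract the block relations of g† F g = F
    have key := hF
    rw [Fmat, S16.blk_conjT, S16.blk_mul, S16.blk_mul] at key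
    obtain ⟨k1, k2, -, -⟩ := S16.blk_inj key
    simp only [mul_zero, zero_mul, mul_one, one_mul, mul_neg, neg_mul, add_zero,
      zero_add, neg_zero] at k1 k2
    -- k1 : -(cᴴ*a) + aᴴ*c = 0,  k2 : -(cᴴ*b) + aᴴ*d = 1
    have r1 : aᴴ * c = cᴴ * a := by
      rw [add_comm, ← sub_eq_add_neg] at k1
      exact sub_eq_zero.mp k1
    have r2 : aᴴ * d - cᴴ * b = 1 := by
      rw [add_comm, ← sub_eq_add_neg] at k2
      exact k2
    -- F² = -1 and g F g† = F
    have hFF : Fmat * Fmat = (-1 : Matrix (Fin 4) (Fin 4) ℂ) := by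
      rw [Fmat, S16.blk_mul]
      simp only [mul_zero, zero_mul, mul_one, one_mul, mul_neg, neg_mul, add_zero,
        zero_add, neg_zero]
      have h1 : (fromBlocks (-1) 0 0 (-1) : Matrix (Fin 2 ⊕ Fin 2) (Fin 2 ⊕ Fin 2) ℂ)
          = -(fromBlocks 1 0 0 1) := by
        rw [Matrix.fromBlocks_neg]; simp
      rw [blk, h1, Matrix.fromBlocks_one, Matrix.reindex_apply]
      ext i j
      simp only [Matrix.submatrix_apply, Matrix.neg_apply, Matrix.one_apply,
        EmbeddingLike.apply_eq_iff_eq]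
    have hFinv : Fmat⁻¹ = -Fmat := by
      apply Matrix.inv_eq_right_inv
      rw [mul_neg, hFF, neg_neg]
    set g := blk a b c d with hgdef
    have hgd : IsUnit g.det := by rw [hdet]; exact isUnit_one
    have hgHd : IsUnit gᴴ.det := by
      rw [Matrix.det_conjTranspose, hdet]; simpa using isUnit_one
    have hmain : g * Fmat * gᴴ = Fmat := by
      have h1 : (gᴴ * Fmat * g)⁻¹ = Fmat⁻¹ := by rw [hF]
      rw [Matrix.mul_inv_rev, Matrix.mul_inv_rev] at h1
      have h2 := congrArg (fun X => g * X * gᴴ) h1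
      rw [← Matrix.mul_assoc, ← Matrix.mul_assoc, Matrix.mul_nonsing_inv _ hgd,
        Matrix.one_mul, Matrix.mul_assoc (Fmat⁻¹), Matrix.nonsing_inv_mul _ hgHd,
        Matrix.mul_one] at h2
      rw [hFinv] at h2
      rw [mul_neg, neg_mul] at h2
      exact neg_injective h2.symm
    rw [hgdef, Fmat, S16.blk_conjT, S16.blk_mul, S16.blk_mul] at hmain
    obtain ⟨m1, -, -, -⟩ := S16.blk_inj hmain
    simp only [mul_zero, zero_mul, mul_one, one_mul, mul_neg, neg_mul, add_zero,
      zero_add, neg_zero] at m1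
    have r_ab : a * bᴴ = b * aᴴ := by
      rw [add_comm, ← sub_eq_add_neg] at m1
      exact sub_eq_zero.mp m1
    -- invertibility of a + bA for hermitian A
    have hstep : ∀ A : S16.M2, Aᴴ = A → IsUnit (a + b * A) := by
      intro A hA
      obtain ⟨A', hA'h, hmapA⟩ := hyp A hA
      simp only [colSpan] at hmapA
      rw [S16.range_map] at hmapA
      obtain ⟨Y, hY⟩ := S16.range_le_iff.1 hmapA.ge
      rw [S16.colMat_eq_stk, S16.colMat_eq_stk, hgdef, S16.blk_mul_stk, S16.stk_mul] at hY
      obtain ⟨h1, -⟩ := S16.stk_inj hY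
      simp only [mul_one] at h1
      exact IsUnit.of_mul_eq_one _ h1.symm
    have ha : IsUnit a := by simpa using hstep 0 (by simp)
    have hadet : IsUnit a.det := (Matrix.isUnit_iff_isUnit_det a).1 ha
    have hAHdet : IsUnit (aᴴ).det := by
      rw [Matrix.det_conjTranspose]; exact hadet.star
    -- P := a⁻¹ b is hermitian
    have hP : (a⁻¹ * b)ᴴ = a⁻¹ * b := by
      rw [Matrix.conjTranspose_mul, Matrix.conjTranspose_nonsing_inv]
      have hb' : bᴴ = a⁻¹ * (b * aᴴ) := by
        rw [← r_ab, ← Matrix.mul_assoc, Matrix.nonsing_inv_mul _ hadet, Matrix.one_mul]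
      rw [hb', Matrix.mul_assoc, Matrix.mul_assoc, Matrix.mul_nonsing_inv _ hAHdet,
        Matrix.mul_one]
    -- P = 0 hence b = 0
    have hPzero : a⁻¹ * b = 0 := by
      apply S16.herm_ne_unit hP
      intro A hA
      have h1 : a + b * A = a * (1 + a⁻¹ * b * A) := by
        rw [mul_add, mul_one]
        congr 1
        rw [← Matrix.mul_assoc, ← Matrix.mul_assoc, Matrix.mul_nonsing_inv _ hadet,
          Matrix.one_mul]
      have hu := hstep A hA
      rw [h1, Matrix.isUnit_iff_isUnit_det, Matrix.det_mul] at hu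
      rw [Matrix.isUnit_iff_isUnit_det]
      exact (IsUnit.mul_iff.1 hu).2
    have hb : b = 0 := by
      have h1 : a * (a⁻¹ * b) = a * 0 := by rw [hPzero]
      rwa [← Matrix.mul_assoc, Matrix.mul_nonsing_inv _ hadet, Matrix.one_mul,
        mul_zero] at h1
    subst hb
    simp only [conjTranspose_zero, mul_zero, sub_zero, zero_mul] at r2
    -- r2 : aᴴ * d = 1
    have hd4 : d = (aᴴ)⁻¹ := (Matrix.inv_eq_right_inv r2).symm
    have hNherm : (c * a⁻¹)ᴴ = c * a⁻¹ := by
      rw [Matrix.conjTranspose_mul, Matrix.conjTranspose_nonsing_inv]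
      have hc' : cᴴ = aᴴ * (c * a⁻¹) := by
        rw [← Matrix.mul_assoc, r1, Matrix.mul_assoc, Matrix.mul_nonsing_inv _ hadet,
          Matrix.mul_one]
      rw [hc', ← Matrix.mul_assoc, Matrix.nonsing_inv_mul _ hAHdet, Matrix.one_mul]
    have hNa : c * a⁻¹ * a = c := by
      rw [Matrix.mul_assoc, Matrix.nonsing_inv_mul _ hadet, Matrix.mul_one]
    refine ⟨a, c * a⁻¹, ha, hNherm, ?_, ?_, ?_⟩
    · -- det a is real
      have hdd : a.det * d.det = 1 := by
        rw [← S16.det_blk_lower a c d, hdet]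
      have hdd2 : aᴴ.det * d.det = 1 := by
        rw [← Matrix.det_mul, r2, Matrix.det_one]
      have hdne : d.det ≠ 0 := by
        intro h0; rw [h0, mul_zero] at hdd; exact one_ne_zero hdd.symm
      have heq : a.det = aᴴ.det := mul_right_cancel₀ hdne (hdd.trans hdd2.symm)
      rw [Matrix.det_conjTranspose] at heq
      have him := congrArg Complex.im heq
      simp only [Complex.star_def, Complex.conj_im] at him
      linarith
    · rw [hgdef, hNa, ← hd4]
    · intro A hA
      have hkey : g * colMat A = colMat (c * a⁻¹ + (aᴴ)⁻¹ * A * a⁻¹) * a := by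
        rw [S16.colMat_eq_stk, S16.colMat_eq_stk, hgdef, S16.blk_mul_stk, S16.stk_mul,
          Matrix.add_mul, hNa, Matrix.mul_assoc ((aᴴ)⁻¹ * A),
          Matrix.nonsing_inv_mul _ hadet, hd4]
        simp
      constructor
      · simp only [colSpan]
        rw [S16.range_map, hkey]
        exact S16.range_mul_unit ha
      · rw [conjTranspose_add, hNherm]
        refine congrArg (c * a⁻¹ + ·) ?_
        rw [Matrix.conjTranspose_mul, Matrix.conjTranspose_mul, hA,
          Matrix.conjTranspose_nonsing_inv, Matrix.conjTranspose_nonsing_inv,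
          Matrix.conjTranspose_conjTranspose, Matrix.mul_assoc]
  · rintro ⟨L, N, hL, hN, him, hgeq, hact⟩ A hA
    exact ⟨N + (Lᴴ)⁻¹ * A * L⁻¹, (hact A hA).2, (hact A hA).1⟩
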